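/- If f and g are homogeneous cochains on A₁⊕A₂ with bidegrees ||f|| = k_f|0 and ||g|| = k_g|0 (or both of bidegrees 0|k_f and 0|l_g), then their Gerstenhaber bracket [f,g]_α vanishes. -/

import Mathlib

section

variable {V : Type*} [AddCommGroup V]

/-- Twisted Gerstenhaber circle product (cochains encoded on sequences). -/
def gcomp (β : V → V) (m n : ℕ) (f g : (ℕ → V) → V) : (ℕ → V) → V :=
  fun a => ∑ i ∈ Finset.range m, ((-1 : ℤ)) ^ (i * (n - 1)) •
    f (fun j => if j < i then β^[n - 1] (a j)
        else if j = i then g (fun t => a (i + t))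
        else β^[n - 1] (a (j + (n - 1))))

/-- Gerstenhaber bracket. -/
def gbracket (β : V → V) (m n : ℕ) (f g : (ℕ → V) → V) : (ℕ → V) → V :=
  fun a => gcomp β m n f g a - ((-1 : ℤ)) ^ ((m - 1) * (n - 1)) • gcomp β n m g f a

end

lemma aux_zero {V W : Type*} [AddCommGroup V] [AddCommGroup W]
    (H : (ℕ → V) → W) (i : ℕ) (c : ℕ → V)
    (h : ∀ x y : V, H (Function.update c i (x + y)) =
      H (Function.update c i x) + H (Function.update c i y))
    (hc : c i = 0) : H c = 0 := by
  have h0 := h 0 0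
  rw [add_zero] at h0
  have h1 : H (Function.update c i 0) = 0 := left_eq_add.mp h0
  rwa [← hc, Function.update_eq_self] at h1

lemma gcomp_snd_zero {A1 A2 : Type*} [AddCommGroup A1] [AddCommGroup A2]
    (β : A1 × A2 → A1 × A2) (M N : ℕ) (F G : (ℕ → A2) → A1)
    (hF : ∀ i < M, ∀ (a : ℕ → A2) (x y : A2),
      F (Function.update a i (x + y)) =
        F (Function.update a i x) + F (Function.update a i y))
    (a : ℕ → A1 × A2) :
    gcomp β M N (fun b => (F (fun i => (b i).2), (0 : A2)))
      (fun b => (G (fun i => (b i).2), (0 : A2))) a = 0 := by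
  unfold gcomp
  apply Finset.sum_eq_zero
  intro i hi
  rw [Finset.mem_range] at hi
  set c : ℕ → A2 := fun j =>
    ((if j < i then β^[N - 1] (a j)
      else if j = i then (G (fun t => (a (i + t)).2), (0 : A2))
      else β^[N - 1] (a (j + (N - 1)))).2) with hcdef
  have hci : c i = 0 := by simp [hcdef]
  have hFc : F c = 0 := aux_zero F i c (fun x y => hF i hi c x y) hci
  have h2 : (F c, (0 : A2)) = (0 : A1 × A2) := by rw [hFc]; rfl
  simp only [h2]
  change ((-1 : ℤ) ^ (i * (N - 1))) • (F c, (0 : A2)) = 0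
  rw [h2]
  exact smul_zero _

lemma gcomp_fst_zero {A1 A2 : Type*} [AddCommGroup A1] [AddCommGroup A2]
    (β : A1 × A2 → A1 × A2) (M N : ℕ) (F G : (ℕ → A1) → A2)
    (hF : ∀ i < M, ∀ (a : ℕ → A1) (x y : A1),
      F (Function.update a i (x + y)) =
        F (Function.update a i x) + F (Function.update a i y))
    (a : ℕ → A1 × A2) :
    gcomp β M N (fun b => ((0 : A1), F (fun i => (b i).1)))
      (fun b => ((0 : A1), G (fun i => (b i).1))) a = 0 := by
  unfold gcomp
  apply Finset.sum_eq_zero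
  intro i hi
  rw [Finset.mem_range] at hi
  set c : ℕ → A1 := fun j =>
    ((if j < i then β^[N - 1] (a j)
      else if j = i then ((0 : A1), G (fun t => (a (i + t)).1))
      else β^[N - 1] (a (j + (N - 1)))).1) with hcdef
  have hci : c i = 0 := by simp [hcdef]
  have hFc : F c = 0 := aux_zero F i c (fun x y => hF i hi c x y) hci
  have h2 : ((0 : A1), F c) = (0 : A1 × A2) := by rw [hFc]; rfl
  simp only [h2]
  change ((-1 : ℤ) ^ (i * (N - 1))) • ((0 : A1), F c) = 0
  rw [h2]
  exact smul_zero _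

/-- if `f, g` are homogeneous (multilinear) cochains on `A₁ ⊕ A₂`
of bidegrees `k_f|0` and `k_g|0` (i.e. lifts of maps `A₂^{⊗(k−1)} → A₁`), or
both of bidegrees `0|k_f`, `0|k_g` (lifts of maps `A₁^{⊗k} → A₂`), then their
Gerstenhaber bracket `[f,g]_α` vanishes.  Here `f` is the lift of an
`(m+1)`-multilinear map `F` and `g` of an `(n+1)`-multilinear map `G`, the
hypotheses `hF, hG, hF', hG'` encoding additivity in each argument slot. -/
theorem stmt_12 {K A1 A2 : Type*} [Field K] [AddCommGroup A1] [Module K A1]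
    [AddCommGroup A2] [Module K A2]
    (α1 : A1 →ₗ[K] A1) (α2 : A2 →ₗ[K] A2) (m n : ℕ)
    (F : (ℕ → A2) → A1) (G : (ℕ → A2) → A1)
    (F' : (ℕ → A1) → A2) (G' : (ℕ → A1) → A2)
    (hF : ∀ i < m + 1, ∀ (a : ℕ → A2) (x y : A2),
      F (Function.update a i (x + y)) =
        F (Function.update a i x) + F (Function.update a i y))
    (hG : ∀ i < n + 1, ∀ (a : ℕ → A2) (x y : A2),
      G (Function.update a i (x + y)) =
        G (Function.update a i x) + G (Function.update a i y))
    (hF' : ∀ i < m + 1, ∀ (a : ℕ → A1) (x y : A1),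
      F' (Function.update a i (x + y)) =
        F' (Function.update a i x) + F' (Function.update a i y))
    (hG' : ∀ i < n + 1, ∀ (a : ℕ → A1) (x y : A1),
      G' (Function.update a i (x + y)) =
        G' (Function.update a i x) + G' (Function.update a i y)) :
    (∀ a : ℕ → A1 × A2,
      gbracket (fun p => (α1 p.1, α2 p.2)) (m + 1) (n + 1)
        (fun b => (F (fun i => (b i).2), (0 : A2)))
        (fun b => (G (fun i => (b i).2), (0 : A2))) a = 0) ∧
    (∀ a : ℕ → A1 × A2,
      gbracket (fun p => (α1 p.1, α2 p.2)) (m + 1) (n + 1)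
        (fun b => ((0 : A1), F' (fun i => (b i).1)))
        (fun b => ((0 : A1), G' (fun i => (b i).1))) a = 0) := by
  constructor
  · intro a
    have z1 := gcomp_snd_zero (fun p : A1 × A2 => (α1 p.1, α2 p.2)) (m+1) (n+1) F G hF a
    have z2 := gcomp_snd_zero (fun p : A1 × A2 => (α1 p.1, α2 p.2)) (n+1) (m+1) G F hG a
    simp [gbracket, z1, z2]
  · intro a
    have z1 := gcomp_fst_zero (fun p : A1 × A2 => (α1 p.1, α2 p.2)) (m+1) (n+1) F' G' hF' a
    have z2 := gcomp_fst_zero (fun p : A1 × A2 => (α1 p.1, α2 p.2)) (n+1) (m+1) G' F' hG' a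
    simp [gbracket, z1, z2]
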